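/- arXiv:1909.00418 — 2 statements merged into one kernel-verified Lean document; each statement's English description precedes it below -/
import Mathlib

section
/- There exists a p-family; that is, there exists a function p assigning to every balanced pair (v,w) of binary sequences an element of the field F = ℚ(q,a,t) satisfying the five recursion rules (1)–(5). -/
open MvPolynomial

noncomputable section

/-- The field `F = ℚ(q,a,t)` of rational functions in three variables over `ℚ`. -/
abbrev KRF : Type := FractionRing (MvPolynomial (Fin 3) ℚ)

/-- The variable `q` in `F`. -/
def fq : KRF := algebraMap (MvPolynomial (Fin 3) ℚ) KRF (X 0)
/-- The variable `a` in `F`. -/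
def fa : KRF := algebraMap (MvPolynomial (Fin 3) ℚ) KRF (X 1)
/-- The variable `t` in `F`. -/
def ft : KRF := algebraMap (MvPolynomial (Fin 3) ℚ) KRF (X 2)

/-- The number `|v|` of ones in a binary sequence. -/
def onesCt (v : List Bool) : ℕ := v.count true

/-- A p-family: a function on (balanced) pairs of binary sequences with values in
`F = ℚ(q,a,t)` satisfying the five recursion rules (1)-(5). -/
def IsPFamily (p : List Bool → List Bool → KRF) : Prop :=
  (∀ n : ℕ, p [] (List.replicate n false) = ((1 + fa) / (1 - fq)) ^ n) ∧
  (∀ m : ℕ, p (List.replicate m false) [] = ((1 + fa) / (1 - fq)) ^ m) ∧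
  (∀ v w : List Bool, onesCt v = onesCt w →
      p (v ++ [true]) (w ++ [true]) = (ft ^ onesCt v + fa) * p v w) ∧
  (∀ v w : List Bool, onesCt v = onesCt w + 1 →
      p (v ++ [false]) (w ++ [true]) = p v (true :: w)) ∧
  (∀ v w : List Bool, onesCt v + 1 = onesCt w →
      p (v ++ [true]) (w ++ [false]) = p (true :: v) w) ∧
  (∀ v w : List Bool, onesCt v = onesCt w →
      p (v ++ [false]) (w ++ [false]) =
        ft ^ (-(onesCt v : ℤ)) * p (true :: v) (true :: w) +
          fq * ft ^ (-(onesCt v : ℤ)) * p (false :: v) (false :: w))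

def cc : KRF := (1 + fa) / (1 - fq)

def lf (v : List Bool) : ℕ := (v.takeWhile (· == false)).length

lemma lf_cons_false (v : List Bool) : lf (false :: v) = lf v + 1 := by
  simp [lf, List.takeWhile]

lemma lf_cons_true (v : List Bool) : lf (true :: v) = 0 := by
  simp [lf, List.takeWhile]

lemma lf_append_true (v : List Bool) : lf (v ++ [true]) = lf v := by
  induction v with
  | nil => simp [lf]
  | cons b v ih =>
    cases b
    · rw [List.cons_append, lf_cons_false, lf_cons_false, ih]
    · rw [List.cons_append, lf_cons_true, lf_cons_true]

lemma lf_append_false (v : List Bool) (h : v.count true ≠ 0) :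
    lf (v ++ [false]) = lf v := by
  induction v with
  | nil => simp at h
  | cons b v ih =>
    cases b
    · rw [List.cons_append, lf_cons_false, lf_cons_false,
        ih (by simpa [List.count_cons] using h)]
    · rw [List.cons_append, lf_cons_true, lf_cons_true]

def f : List Bool → List Bool → KRF
  | [], w => cc ^ w.length
  | _ :: v, [] => cc ^ (v.length + 1)
  | true :: v, true :: w => (ft ^ (v.count true) + fa) * f v w
  | false :: v, true :: w => f v (w ++ [true])
  | true :: v, false :: w => f (v ++ [true]) w
  | false :: v, false :: w =>
      if v.count true = 0 then f (v ++ [true]) (w ++ [true]) / (1 - fq)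
      else ft ^ (-(v.count true : ℤ)) * f (v ++ [true]) (w ++ [true])
           + fq * ft ^ (-(v.count true : ℤ)) * f (v ++ [false]) (w ++ [false])
termination_by v w => (v.length + w.length, lf v)
decreasing_by
  all_goals simp_wf
  all_goals first
    | exact Prod.Lex.left _ _ (by omega)
    | exact Prod.Lex.right _ (by rw [lf_append_true, lf_cons_false]; omega)
    | exact Prod.Lex.right _ (by
        rename_i h
        rw [lf_append_false _ h, lf_cons_false]; omega)

lemma one_sub_fq_ne : (1 : KRF) - fq ≠ 0 := by
  intro h
  have h2 : ((1 : MvPolynomial (Fin 3) ℚ) - X 0) = 0 := by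
    apply IsFractionRing.injective (MvPolynomial (Fin 3) ℚ) KRF
    rw [map_sub, map_one, map_zero]
    exact h
  have := congrArg constantCoeff h2
  simp at this

lemma allfalse_append (v : List Bool) (h : v.count true = 0) :
    v ++ [false] = false :: v := by
  have hv : v = List.replicate v.length false := by
    rw [List.eq_replicate_iff]
    refine ⟨rfl, fun b hb => ?_⟩
    cases b
    · rfl
    · exact absurd (List.count_eq_zero.mp h) (by simp [hb])
  conv_lhs => rw [hv]
  conv_rhs => rw [hv]
  rw [← List.replicate_succ, ← List.replicate_succ']


/-- There exists a p-family. -/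
theorem exists_pFamily : ∃ p : List Bool → List Bool → KRF, IsPFamily p := by
  refine ⟨fun v w => f v.reverse w.reverse, ?_, ?_, ?_, ?_, ?_, ?_⟩
  · intro n
    simp [f, cc, List.reverse_replicate]
  · intro m
    cases m with
    | zero => simp [f, cc]
    | succ m =>
      simp only [List.reverse_replicate, List.reverse_nil]
      rw [List.replicate_succ]
      simp [f, cc]
  · intro v w h
    simp [f, List.reverse_append, List.count_reverse, onesCt]
  · intro v w h
    simp [f, List.reverse_append]
  · intro v w h
    simp [f, List.reverse_append]
  · intro v w h
    by_cases h0 : v.count true = 0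
    · have h0w : w.count true = 0 := by
        have := h; simp only [onesCt] at this; omega
      have hv0 : v.reverse.count true = 0 := by simpa [List.count_reverse] using h0
      have hw0 : w.reverse.count true = 0 := by simpa [List.count_reverse] using h0w
      have e1 : v.reverse ++ [false] = false :: v.reverse := allfalse_append _ hv0
      have e2 : w.reverse ++ [false] = false :: w.reverse := allfalse_append _ hw0
      have hone : onesCt v = 0 := h0
      simp only [List.reverse_append, List.reverse_cons, List.reverse_singleton,
        List.singleton_append, List.reverse_nil, List.nil_append]
      rw [show f (false :: v.reverse) (false :: w.reverse) =
          f (v.reverse ++ [true]) (w.reverse ++ [true]) / (1 - fq) by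
        simp [f, List.count_reverse, h0]]
      rw [e1, e2]
      rw [show f (false :: v.reverse) (false :: w.reverse) =
          f (v.reverse ++ [true]) (w.reverse ++ [true]) / (1 - fq) by
        simp [f, List.count_reverse, h0]]
      rw [hone]
      simp only [Nat.cast_zero, neg_zero, zpow_zero, one_mul, mul_one]
      have hne := one_sub_fq_ne
      field_simp
      ring
    · have hv0 : ¬ v.reverse.count true = 0 := by simpa [List.count_reverse] using h0
      simp only [List.reverse_append, List.reverse_cons, List.reverse_singleton,
        List.singleton_append, List.reverse_nil, List.nil_append]
      rw [show f (false :: v.reverse) (false :: w.reverse) =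
          ft ^ (-(v.reverse.count true : ℤ)) * f (v.reverse ++ [true]) (w.reverse ++ [true])
          + fq * ft ^ (-(v.reverse.count true : ℤ)) *
            f (v.reverse ++ [false]) (w.reverse ++ [false]) by
        simp [f, List.count_reverse, h0]]
      simp [onesCt, List.count_reverse]
end
end

section
/- The p-family is symmetric: for every balanced pair (v,w) of binary sequences, p(v,w) = p(w,v). -/
open MvPolynomial

noncomputable section

def tzR : List Bool → ℕ
  | [] => 0
  | true :: _ => 0
  | false :: l => tzR l + 1

def tz (v : List Bool) : ℕ := tzR v.reverse

lemma tzR_le : ∀ l : List Bool, tzR l ≤ l.length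
  | [] => le_refl _
  | true :: _ => Nat.zero_le _
  | false :: l => by simpa [tzR] using Nat.succ_le_succ (tzR_le l)

lemma tz_le (v : List Bool) : tz v ≤ v.length := by
  simpa [tz] using tzR_le v.reverse

lemma tzR_append_of_mem : ∀ (l : List Bool), true ∈ l → ∀ l', tzR (l ++ l') = tzR l := by
  intro l
  induction l with
  | nil => intro h; simp at h
  | cons x t ihl =>
    intro h l'
    cases x with
    | true => rfl
    | false =>
      have ht : true ∈ t := by simpa using h
      simp [tzR, ihl ht l']

lemma tz_cons_of_mem (x : Bool) (v : List Bool) (h : true ∈ v) : tz (x :: v) = tz v := by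
  unfold tz
  rw [List.reverse_cons, tzR_append_of_mem _ (by simpa using h)]

lemma tz_concat_false (v : List Bool) : tz (v ++ [false]) = tz v + 1 := by
  unfold tz
  rw [List.reverse_append]
  rfl

lemma tzR_replicate_false_append (l : List Bool) : ∀ m, tzR (List.replicate m false ++ l) = m + tzR l := by
  intro m
  induction m with
  | zero => simp
  | succ n ihm => simp [List.replicate_succ, tzR, ihm]; omega

lemma tz_replicate (m : ℕ) : tz (List.replicate m false) = m := by
  unfold tz
  rw [List.reverse_replicate]
  simpa [tzR] using tzR_replicate_false_append [] m

lemma tz_true_replicate (m : ℕ) : tz (true :: List.replicate m false) = m := by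
  unfold tz
  rw [List.reverse_cons, List.reverse_replicate]
  simp [tzR_replicate_false_append, tzR]

lemma onesCt_concat_true (v : List Bool) : onesCt (v ++ [true]) = onesCt v + 1 := by
  simp [onesCt]
lemma onesCt_concat_false (v : List Bool) : onesCt (v ++ [false]) = onesCt v := by
  simp [onesCt]
lemma onesCt_cons_true (v : List Bool) : onesCt (true :: v) = onesCt v + 1 := by
  simp [onesCt, List.count_cons]
lemma onesCt_cons_false (v : List Bool) : onesCt (false :: v) = onesCt v := by
  simp [onesCt, List.count_cons]

lemma sq_step (a N m : ℕ) (h : (a + 2) * (a + 2) ≤ N + 1) (hm : m ≤ a + 1) :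
    (a + 1) * (a + 1) + m ≤ N := by nlinarith

lemma sq_step2 (a N m : ℕ) (h : (a + 2) * (a + 2) ≤ N + 1) (hm : m ≤ a) :
    a * a + m ≤ N := by nlinarith

lemma pFamily_symm_key (p : List Bool → List Bool → KRF) (hp : IsPFamily p) :
    ∀ N v w, (v.length + w.length) * (v.length + w.length) + min (tz v) (tz w) ≤ N →
      onesCt v = onesCt w → p v w = p w v := by
  obtain ⟨r1, r1', r2, r3, r4, r5⟩ := hp
  intro N
  induction N with
  | zero =>
    intro v w hM hb
    have hs : (v.length + w.length) * (v.length + w.length) = 0 := by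
      have := le_trans (Nat.le_add_right _ (min (tz v) (tz w))) hM
      omega
    have hs' : v.length + w.length = 0 := mul_self_eq_zero.mp hs
    have hv : v = [] := List.length_eq_zero_iff.mp (by omega)
    have hw : w = [] := List.length_eq_zero_iff.mp (by omega)
    rw [hv, hw]
  | succ N ih =>
    intro v w hM hb
    rcases List.eq_nil_or_concat v with rfl | ⟨v', x, hv⟩
    · -- v = [], so w is all false
      have hw0 : onesCt w = 0 := by simpa [onesCt] using hb.symm
      have hwr : w = List.replicate w.length false := by
        apply List.eq_replicate_length.mpr
        intro b hbw
        have : true ∉ w := List.count_eq_zero.mp hw0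
        cases b
        · rfl
        · exact absurd hbw this
      rw [hwr, r1, r1']
    rw [List.concat_eq_append] at hv
    subst hv
    rcases List.eq_nil_or_concat w with rfl | ⟨w', y, hw⟩
    · have hv0 : onesCt (v' ++ [x]) = 0 := by simpa [onesCt] using hb
      have hvr : v' ++ [x] = List.replicate (v' ++ [x]).length false := by
        apply List.eq_replicate_length.mpr
        intro b hbv
        have : true ∉ v' ++ [x] := List.count_eq_zero.mp hv0
        cases b
        · rfl
        · exact absurd hbv this
      rw [hvr, r1, r1']
    rw [List.concat_eq_append] at hw
    subst hw
    -- both nonempty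
    have hlen : (v' ++ [x]).length + (w' ++ [y]).length = v'.length + w'.length + 2 := by
      simp; omega
    set L := v'.length + w'.length with hL
    have htzv' : tz v' ≤ v'.length := tz_le v'
    have htzw' : tz w' ≤ w'.length := tz_le w'
    have hMv : (L + 2) * (L + 2) ≤ N + 1 := by
      have := le_trans (Nat.le_add_right _ (min (tz (v' ++ [x])) (tz (w' ++ [y])))) hM
      rw [hlen] at this
      exact this
    cases x with
    | true =>
      cases y with
      | true =>
        have hb' : onesCt v' = onesCt w' := by
          rw [onesCt_concat_true, onesCt_concat_true] at hb; omega
        have hmle : min (tz v') (tz w') ≤ L :=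
          le_trans (Nat.min_le_left _ _) (le_trans htzv' (by omega))
        rw [r2 v' w' hb', r2 w' v' hb'.symm, hb',
          ih v' w' (by rw [← hL]; exact sq_step2 L N _ hMv hmle) hb']
      | false =>
        have hb' : onesCt v' + 1 = onesCt w' := by
          rw [onesCt_concat_true, onesCt_concat_false] at hb; omega
        rw [r4 v' w' hb', r3 w' v' hb'.symm]
        have hb'' : onesCt (true :: v') = onesCt w' := by
          rw [onesCt_cons_true]; omega
        refine (ih (true :: v') w' ?_ hb'').symm.symm
        have h1 : (true :: v').length + w'.length = L + 1 := by simp [hL]; omega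
        have h2 : min (tz (true :: v')) (tz w') ≤ L + 1 :=
          le_trans (Nat.min_le_left _ _) (le_trans (tz_le _) (by simp only [List.length_cons, hL]; omega))
        rw [h1]
        exact sq_step L N _ hMv h2
    | false =>
      cases y with
      | true =>
        have hb' : onesCt w' + 1 = onesCt v' := by
          rw [onesCt_concat_false, onesCt_concat_true] at hb; omega
        rw [r3 v' w' hb'.symm, r4 w' v' hb']
        have hb'' : onesCt v' = onesCt (true :: w') := by
          rw [onesCt_cons_true]; omega
        refine ih v' (true :: w') ?_ hb''
        have h1 : v'.length + (true :: w').length = L + 1 := by simp [hL]; omega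
        have h2 : min (tz v') (tz (true :: w')) ≤ L + 1 :=
          le_trans (Nat.min_le_left _ _) (le_trans htzv' (by omega))
        rw [h1]
        exact sq_step L N _ hMv h2
      | false =>
        have hb' : onesCt v' = onesCt w' := by
          rw [onesCt_concat_false, onesCt_concat_false] at hb; omega
        have htzc : tz (v' ++ [false]) = tz v' + 1 := tz_concat_false v'
        have htzc' : tz (w' ++ [false]) = tz w' + 1 := tz_concat_false w'
        by_cases hmem : true ∈ v'
        · -- both contain a one
          have hmemw : true ∈ w' := by
            have : 0 < onesCt w' := by
              rw [← hb']
              exact List.count_pos_iff.mpr hmem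
            exact List.count_pos_iff.mp this
          have hMbound : ∀ x : Bool,
              ((x :: v').length + (x :: w').length) * ((x :: v').length + (x :: w').length)
                + min (tz (x :: v')) (tz (x :: w')) ≤ N := by
            intro x
            have e1 : tz (x :: v') = tz v' := tz_cons_of_mem x v' hmem
            have e2 : tz (x :: w') = tz w' := tz_cons_of_mem x w' hmemw
            have e3 : (x :: v').length + (x :: w').length = L + 2 := by simp [hL]; omega
            rw [e1, e2, e3]
            have hM' := hM
            rw [hlen, htzc, htzc'] at hM'
            set S := (L + 2) * (L + 2) with hS
            omega
          have hb1 : onesCt (true :: v') = onesCt (true :: w') := by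
            rw [onesCt_cons_true, onesCt_cons_true]; omega
          have hb0 : onesCt (false :: v') = onesCt (false :: w') := by
            rw [onesCt_cons_false, onesCt_cons_false]; omega
          rw [r5 v' w' hb', r5 w' v' hb'.symm, hb',
            ih (true :: v') (true :: w') (hMbound true) hb1,
            ih (false :: v') (false :: w') (hMbound false) hb0]
        · -- all-false case
          have hv0 : onesCt v' = 0 := List.count_eq_zero.mpr hmem
          have hw0 : onesCt w' = 0 := by omega
          have hmemw : true ∉ w' := List.count_eq_zero.mp hw0
          have hvr : v' = List.replicate v'.length false := by
            apply List.eq_replicate_length.mpr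
            intro b hbv
            cases b
            · rfl
            · exact absurd hbv hmem
          have hwr : w' = List.replicate w'.length false := by
            apply List.eq_replicate_length.mpr
            intro b hbw
            cases b
            · rfl
            · exact absurd hbw hmemw
          have e5 := r5 v' w' hb'
          have e5' := r5 w' v' hb'.symm
          have hpow : ft ^ (-(onesCt v' : ℤ)) = 1 := by rw [hv0]; simp
          have hpow' : ft ^ (-(onesCt w' : ℤ)) = 1 := by rw [hw0]; simp
          rw [hpow] at e5
          rw [hpow'] at e5'
          have hfv : false :: v' = v' ++ [false] := by
            conv_lhs => rw [hvr]
            conv_rhs => rw [hvr]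
            rw [← List.replicate_succ, List.replicate_succ']
          have hfw : false :: w' = w' ++ [false] := by
            conv_lhs => rw [hwr]
            conv_rhs => rw [hwr]
            rw [← List.replicate_succ, List.replicate_succ']
          rw [hfv, hfw, one_mul, mul_one] at e5 e5'
          have hb1 : onesCt (true :: v') = onesCt (true :: w') := by
            rw [onesCt_cons_true, onesCt_cons_true]; omega
          have hsymm1 : p (true :: v') (true :: w') = p (true :: w') (true :: v') := by
            apply ih _ _ _ hb1
            have e1 : tz (true :: v') = v'.length := by
              conv_lhs => rw [hvr]
              exact tz_true_replicate v'.length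
            have e2 : tz (true :: w') = w'.length := by
              conv_lhs => rw [hwr]
              exact tz_true_replicate w'.length
            have e3 : tz (v' ++ [false]) = v'.length + 1 := by
              rw [tz_concat_false]
              conv_lhs => rw [hvr, tz_replicate]
            have e4 : tz (w' ++ [false]) = w'.length + 1 := by
              rw [tz_concat_false]
              conv_lhs => rw [hwr, tz_replicate]
            have hM' := hM
            rw [hlen, e3, e4] at hM'
            have e6 : (true :: v').length + (true :: w').length = L + 2 := by simp [hL]; omega
            rw [e1, e2, e6]
            set S := (L + 2) * (L + 2) with hS
            omega
          have key : (1 - fq) * p (v' ++ [false]) (w' ++ [false])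
              = (1 - fq) * p (w' ++ [false]) (v' ++ [false]) := by
            have l1 : (1 - fq) * p (v' ++ [false]) (w' ++ [false])
                = p (true :: v') (true :: w') := by linear_combination e5
            have l2 : (1 - fq) * p (w' ++ [false]) (v' ++ [false])
                = p (true :: w') (true :: v') := by linear_combination e5'
            rw [l1, l2, hsymm1]
          exact mul_left_cancel₀ one_sub_fq_ne key

/-- The p-family is symmetric: `p(v,w) = p(w,v)` for every balanced pair. -/
theorem pFamily_symm (p : List Bool → List Bool → KRF) (hp : IsPFamily p)
    (v w : List Bool) (hvw : onesCt v = onesCt w) :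
    p v w = p w v :=
  pFamily_symm_key p hp _ v w le_rfl hvw
end
end
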